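/- Let μ(A) = ν(A)² with ν Lebesgue measure on [0,1]. For 0 ≤ a < b ≤ 1 and n ≥ 0, ∫_a^b xⁿ dμ = (2/((n+1)(n+2)))·(b^(n+2) - a^(n+2)) - (2a^(n+1)/(n+1))·(b-a). -/

import Mathlib

open MeasureTheory Set

/-- The (Lebesgue)² quantum measure: the square of Lebesgue measure. -/
noncomputable def lebSq (A : Set ℝ) : ℝ := (volume A).toReal ^ 2

lemma lebSq_Ioo {p q : ℝ} (h : p ≤ q) : lebSq (Set.Ioo p q) = (q - p) ^ 2 := by
  simp [lebSq, Real.volume_Ioo, ENNReal.toReal_ofReal (sub_nonneg.mpr h)]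

lemma lebSq_empty : lebSq ∅ = 0 := by simp [lebSq]

lemma pow_rpow_helper {x : ℝ} (hx : 0 ≤ x) (n : ℕ) (e : ℝ) (m : ℕ)
    (he : (n : ℝ) * e = m) : (x ^ n) ^ e = x ^ m := by
  rw [← Real.rpow_natCast x n, ← Real.rpow_mul hx, he, Real.rpow_natCast]

lemma stmt_9_aux (n : ℕ) (hn : n ≠ 0) (a b : ℝ) (ha : 0 ≤ a) (hab : a < b) (hb : b ≤ 1) :
    (∫ lam in Set.Ioi (0 : ℝ), lebSq (Set.Ioo a b ∩ {x | x ^ n > lam})) =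
      (2 / (((n : ℝ) + 1) * ((n : ℝ) + 2))) * (b ^ (n + 2) - a ^ (n + 2)) -
        (2 * a ^ (n + 1) / ((n : ℝ) + 1)) * (b - a) := by
  have hb0 : (0:ℝ) ≤ b := le_trans ha hab.le
  have hanbn : a ^ n ≤ b ^ n := pow_le_pow_left₀ ha hab.le n
  have han0 : (0:ℝ) ≤ a ^ n := pow_nonneg ha n
  have hbn0 : (0:ℝ) ≤ b ^ n := pow_nonneg hb0 n
  have hun : (0:ℝ) < (n : ℝ)⁻¹ := by positivity
  set u : ℝ := (n : ℝ)⁻¹ with hu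
  set c : ℝ → ℝ := fun lam => lebSq (Set.Ioo a b ∩ {x | x ^ n > lam}) with hc
  -- pointwise identities
  have h1 : ∀ lam ∈ Set.Ioc (0:ℝ) (a ^ n), c lam = (b - a) ^ 2 := by
    intro lam hl
    have hset : Set.Ioo a b ∩ {x | x ^ n > lam} = Set.Ioo a b := by
      refine inter_eq_left.mpr fun x hx => ?_
      exact lt_of_le_of_lt hl.2 (pow_lt_pow_left₀ hx.1 ha hn)
    simp only [hc, hset]
    exact lebSq_Ioo hab.le
  have h2 : ∀ lam ∈ Set.Ioc (a ^ n) (b ^ n), c lam = (b - lam ^ u) ^ 2 := by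
    intro lam hl
    have hlam0 : (0:ℝ) ≤ lam := le_trans han0 hl.1.le
    have har : a ≤ lam ^ u := by
      calc a = (a ^ n) ^ u := (Real.pow_rpow_inv_natCast ha hn).symm
        _ ≤ lam ^ u := Real.rpow_le_rpow han0 hl.1.le hun.le
    have hrb : lam ^ u ≤ b := by
      calc lam ^ u ≤ (b ^ n) ^ u := Real.rpow_le_rpow hlam0 hl.2 hun.le
        _ = b := Real.pow_rpow_inv_natCast hb0 hn
    have hr0 : (0:ℝ) ≤ lam ^ u := Real.rpow_nonneg hlam0 u
    have hset : Set.Ioo a b ∩ {x | x ^ n > lam} = Set.Ioo (lam ^ u) b := by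
      ext x
      simp only [mem_inter_iff, mem_Ioo, mem_setOf_eq, gt_iff_lt]
      constructor
      · rintro ⟨⟨hax, hxb⟩, hxn⟩
        have hx0 : (0:ℝ) ≤ x := le_trans ha hax.le
        refine ⟨?_, hxb⟩
        calc lam ^ u < (x ^ n) ^ u := Real.rpow_lt_rpow hlam0 hxn hun
          _ = x := Real.pow_rpow_inv_natCast hx0 hn
      · rintro ⟨hrx, hxb⟩
        refine ⟨⟨lt_of_le_of_lt har hrx, hxb⟩, ?_⟩
        calc lam = (lam ^ u) ^ n := (Real.rpow_inv_natCast_pow hlam0 hn).symm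
          _ < x ^ n := pow_lt_pow_left₀ hrx hr0 hn
    simp only [hc, hset]
    exact lebSq_Ioo hrb
  have h3 : ∀ lam ∈ Set.Ioi (b ^ n), c lam = 0 := by
    intro lam hl
    have hset : Set.Ioo a b ∩ {x | x ^ n > lam} = ∅ := by
      refine eq_empty_iff_forall_notMem.mpr fun x hx => ?_
      have hx0 : (0:ℝ) ≤ x := le_trans ha hx.1.1.le
      have : x ^ n ≤ b ^ n := pow_le_pow_left₀ hx0 hx.1.2.le n
      exact absurd hx.2 (not_lt.mpr (le_trans this (le_of_lt hl)))
    simp only [hc, hset]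
    exact lebSq_empty
  -- split the integral
  have hsplit : Set.Ioi (0:ℝ) = (Set.Ioc 0 (a ^ n) ∪ Set.Ioc (a ^ n) (b ^ n)) ∪ Set.Ioi (b ^ n) := by
    rw [Set.Ioc_union_Ioc_eq_Ioc han0 hanbn, Set.Ioc_union_Ioi_eq_Ioi hbn0]
  -- continuity of the mid function
  have hcont : Continuous (fun lam : ℝ => (b - lam ^ u) ^ 2) := by
    have : Continuous (fun lam : ℝ => lam ^ u) := by
      rw [continuous_iff_continuousAt]
      intro x
      exact Real.continuousAt_rpow_const x u (Or.inr hun.le)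
    fun_prop
  have I1 : IntegrableOn c (Set.Ioc 0 (a ^ n)) volume := by
    refine ((integrableOn_const_iff).mpr (Or.inr measure_Ioc_lt_top)).congr_fun
      (fun x hx => (h1 x hx).symm) measurableSet_Ioc
  have I2 : IntegrableOn c (Set.Ioc (a ^ n) (b ^ n)) volume := by
    refine (hcont.integrableOn_Ioc).congr_fun (fun x hx => (h2 x hx).symm) measurableSet_Ioc
  have I3 : IntegrableOn c (Set.Ioi (b ^ n)) volume := by
    refine ((integrable_zero _ _ _).integrableOn).congr_fun
      (fun x hx => (h3 x hx).symm) measurableSet_Ioi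
  have hd1 : Disjoint (Set.Ioc (0:ℝ) (a ^ n)) (Set.Ioc (a ^ n) (b ^ n)) :=
    Set.Ioc_disjoint_Ioc_of_le le_rfl
  have hd2 : Disjoint (Set.Ioc (0:ℝ) (a ^ n) ∪ Set.Ioc (a ^ n) (b ^ n)) (Set.Ioi (b ^ n)) := by
    rw [Set.Ioc_union_Ioc_eq_Ioc han0 hanbn]
    exact Set.Ioc_disjoint_Ioi le_rfl
  rw [hsplit, setIntegral_union hd2 measurableSet_Ioi (I1.union I2) I3,
    setIntegral_union hd1 measurableSet_Ioc I1 I2]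
  -- evaluate each piece
  have E1 : ∫ lam in Set.Ioc (0:ℝ) (a ^ n), c lam = a ^ n * (b - a) ^ 2 := by
    rw [setIntegral_congr_fun measurableSet_Ioc h1, setIntegral_const, Real.volume_real_Ioc,
      sub_zero, max_eq_left han0, smul_eq_mul]
  have E3 : ∫ lam in Set.Ioi (b ^ n), c lam = 0 := by
    rw [setIntegral_congr_fun measurableSet_Ioi h3, integral_zero]
  have hnR : ((n:ℝ)) ≠ 0 := Nat.cast_ne_zero.mpr hn
  have key1 : ((b:ℝ) ^ n) ^ (u + 1) = b ^ (n + 1) := by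
    refine pow_rpow_helper hb0 n _ _ ?_
    rw [hu]; push_cast; field_simp <;> ring
  have key1a : ((a:ℝ) ^ n) ^ (u + 1) = a ^ (n + 1) := by
    refine pow_rpow_helper ha n _ _ ?_
    rw [hu]; push_cast; field_simp <;> ring
  have key2 : ((b:ℝ) ^ n) ^ (u * 2 + 1) = b ^ (n + 2) := by
    refine pow_rpow_helper hb0 n _ _ ?_
    rw [hu]; push_cast; field_simp <;> ring
  have key2a : ((a:ℝ) ^ n) ^ (u * 2 + 1) = a ^ (n + 2) := by
    refine pow_rpow_helper ha n _ _ ?_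
    rw [hu]; push_cast; field_simp <;> ring
  have E2 : ∫ lam in Set.Ioc (a ^ n) (b ^ n), c lam =
      b ^ 2 * (b ^ n - a ^ n) - 2 * b * ((b ^ (n+1) - a ^ (n+1)) / (u + 1))
        + (b ^ (n+2) - a ^ (n+2)) / (u * 2 + 1) := by
    rw [setIntegral_congr_fun measurableSet_Ioc h2,
      ← intervalIntegral.integral_of_le hanbn]
    have hEq : Set.EqOn (fun lam : ℝ => (b - lam ^ u) ^ 2)
        (fun lam : ℝ => b ^ 2 - 2 * b * lam ^ u + lam ^ (u * 2)) (Set.uIcc (a ^ n) (b ^ n)) := by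
      intro lam hlam
      have hlam0 : (0:ℝ) ≤ lam := by
        rw [Set.uIcc_of_le hanbn] at hlam
        exact le_trans han0 hlam.1
      have h2pow : (lam ^ u) ^ (2:ℕ) = lam ^ (u * 2) := by
        rw [← Real.rpow_natCast (lam ^ u) 2, ← Real.rpow_mul hlam0]
        norm_num
      simp only
      rw [← h2pow]
      ring
    rw [intervalIntegral.integral_congr hEq]
    have hi1 : IntervalIntegrable (fun lam : ℝ => lam ^ u) volume (a ^ n) (b ^ n) :=
      intervalIntegral.intervalIntegrable_rpow' (by linarith)
    have hi2 : IntervalIntegrable (fun lam : ℝ => lam ^ (u * 2)) volume (a ^ n) (b ^ n) :=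
      intervalIntegral.intervalIntegrable_rpow' (by nlinarith)
    rw [intervalIntegral.integral_add (intervalIntegrable_const.sub (hi1.const_mul (2 * b))) hi2,
      intervalIntegral.integral_sub intervalIntegrable_const (hi1.const_mul (2 * b)),
      intervalIntegral.integral_const_mul, intervalIntegral.integral_const,
      integral_rpow (Or.inl (by linarith)), integral_rpow (Or.inl (by nlinarith)),
      key1, key1a, key2, key2a, smul_eq_mul]
    ring
  rw [E1, E2, E3]
  have hu1 : u + 1 ≠ 0 := by positivity
  have hu2 : u * 2 + 1 ≠ 0 := by positivity
  have hn1 : ((n:ℝ) + 1) ≠ 0 := by positivity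
  have hn2 : ((n:ℝ) + 2) ≠ 0 := by positivity
  rw [hu]
  field_simp
  ring

theorem stmt_9 (n : ℕ) (a b : ℝ) (ha : 0 ≤ a) (hab : a < b) (hb : b ≤ 1) :
    (∫ lam in Set.Ioi (0 : ℝ), lebSq (Set.Ioo a b ∩ {x | x ^ n > lam})) =
      (2 / (((n : ℝ) + 1) * ((n : ℝ) + 2))) * (b ^ (n + 2) - a ^ (n + 2)) -
        (2 * a ^ (n + 1) / ((n : ℝ) + 1)) * (b - a) := by
  rcases eq_or_ne n 0 with rfl | hn
  · -- n = 0 : x ^ 0 = 1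
    have hsplit : Set.Ioi (0:ℝ) = Set.Ioo 0 1 ∪ Set.Ici 1 :=
      (Set.Ioo_union_Ici_eq_Ioi one_pos).symm
    set c : ℝ → ℝ := fun lam => lebSq (Set.Ioo a b ∩ {x | x ^ 0 > lam}) with hc
    have h1 : ∀ lam ∈ Set.Ioo (0:ℝ) 1, c lam = (b - a) ^ 2 := by
      intro lam hl
      have hset : Set.Ioo a b ∩ {x : ℝ | x ^ 0 > lam} = Set.Ioo a b := by
        refine inter_eq_left.mpr fun x _ => ?_
        simpa using hl.2
      simp only [hc, hset]
      exact lebSq_Ioo hab.le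
    have h2 : ∀ lam ∈ Set.Ici (1:ℝ), c lam = 0 := by
      intro lam hl
      have hset : Set.Ioo a b ∩ {x : ℝ | x ^ 0 > lam} = ∅ := by
        refine eq_empty_iff_forall_notMem.mpr fun x hx => ?_
        have : (x:ℝ) ^ 0 = 1 := pow_zero x
        rw [mem_inter_iff, mem_setOf_eq, this] at hx
        exact absurd hx.2 (not_lt.mpr hl)
      simp only [hc, hset]
      exact lebSq_empty
    have I1 : IntegrableOn c (Set.Ioo 0 1) volume :=
      ((integrableOn_const_iff).mpr (Or.inr measure_Ioo_lt_top)).congr_fun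
        (fun x hx => (h1 x hx).symm) measurableSet_Ioo
    have I2 : IntegrableOn c (Set.Ici 1) volume :=
      ((integrable_zero _ _ _).integrableOn).congr_fun
        (fun x hx => (h2 x hx).symm) measurableSet_Ici
    have hd : Disjoint (Set.Ioo (0:ℝ) 1) (Set.Ici 1) := by
      refine Set.disjoint_left.mpr fun x hx hx' => ?_
      exact absurd hx.2 (not_lt.mpr hx')
    rw [hsplit, setIntegral_union hd measurableSet_Ici I1 I2,
      setIntegral_congr_fun measurableSet_Ioo h1, setIntegral_congr_fun measurableSet_Ici h2,
      integral_zero, setIntegral_const, Real.volume_real_Ioo]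
    norm_num
    ring
  · exact stmt_9_aux n hn a b ha hab hb
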